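/- If p is an odd prime and q = p^e, then for every m ≥ 1 the linearized Wenger graph L_m(q) contains a cycle of length 6; combined with the absence of 4-cycles, its girth is 6. -/

import Mathlib

/-- In the linearized Wenger graph, point `P` is adjacent to line `L` iff
`l_k + p_k = p_1^{p^{k-2}} l_1` for `2 ≤ k ≤ m+1`. -/
def lwAdj (p : ℕ) {F : Type} [Field F] {m : ℕ} (P L : Fin (m + 1) → F) : Prop :=
  ∀ k : Fin m, L k.succ + P k.succ = P 0 ^ p ^ (k : ℕ) * L 0

/-- The linearized Wenger graph `L_m(q)` as a bipartite graph on points ⊕ lines. -/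
def lwGraph (p : ℕ) (F : Type) [Field F] (m : ℕ) :
    SimpleGraph ((Fin (m + 1) → F) ⊕ (Fin (m + 1) → F)) :=
  SimpleGraph.fromRel fun v w => match v, w with
    | Sum.inl P, Sum.inr L => lwAdj p P L
    | _, _ => False

section aux
variable {p : ℕ} {F : Type} [Field F] {m : ℕ}

lemma lw_adj_iff (P L : Fin (m+1) → F) :
    (lwGraph p F m).Adj (Sum.inl P) (Sum.inr L) ↔ lwAdj p P L := by
  simp [lwGraph, SimpleGraph.fromRel_adj]

lemma lw_not_adj_ll (P P' : Fin (m+1) → F) :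
    ¬ (lwGraph p F m).Adj (Sum.inl P) (Sum.inl P') := by
  simp [lwGraph, SimpleGraph.fromRel_adj]

lemma lw_not_adj_rr (L L' : Fin (m+1) → F) :
    ¬ (lwGraph p F m).Adj (Sum.inr L) (Sum.inr L') := by
  simp [lwGraph, SimpleGraph.fromRel_adj]

lemma lw_adj_isLeft {v w} (h : (lwGraph p F m).Adj v w) : v.isLeft = !w.isLeft := by
  cases v <;> cases w <;>
    simp_all [lwGraph, SimpleGraph.fromRel_adj]

lemma lw_walk_even {u v} (w : (lwGraph p F m).Walk u v) :
    Even w.length ↔ u.isLeft = v.isLeft := by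
  induction w with
  | nil => simp
  | @cons a b c h q ih =>
    have hab := lw_adj_isLeft h
    rw [SimpleGraph.Walk.length_cons, Nat.even_add_one, ih, hab]
    cases c.isLeft <;> cases b.isLeft <;> simp_all

lemma lw_no_four (hm : 1 ≤ m) (P P' L L' : Fin (m+1) → F)
    (hPP : P ≠ P') (hLL : L ≠ L')
    (h1 : lwAdj p P L) (h2 : lwAdj p P' L) (h3 : lwAdj p P' L') (h4 : lwAdj p P L') :
    False := by
  by_cases h0 : P 0 = P' 0
  · apply hPP
    funext i
    refine Fin.cases h0 (fun k => ?_) i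
    have a := h1 k; have b := h2 k
    rw [h0] at a
    linear_combination a - b
  · set k0 : Fin m := ⟨0, hm⟩ with hk0
    have hk : ((k0 : Fin m) : ℕ) = 0 := rfl
    have e1 := h1 k0; have e2 := h2 k0; have e3 := h3 k0; have e4 := h4 k0
    rw [hk, pow_zero, pow_one] at e1 e2 e3 e4
    have key : (P 0 - P' 0) * (L 0 - L' 0) = 0 := by linear_combination e4 - e1 + e2 - e3
    have hL0 : L 0 = L' 0 := by
      rcases mul_eq_zero.1 key with h | h
      · exact absurd (sub_eq_zero.1 h) h0
      · exact sub_eq_zero.1 h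
    apply hLL
    funext i
    refine Fin.cases hL0 (fun k => ?_) i
    have a := h1 k; have b := h4 k
    rw [hL0] at a
    linear_combination a - b

lemma lw_cycle_len_ge (hm : 1 ≤ m) {v} (c : (lwGraph p F m).Walk v v) (hc : c.IsCycle) :
    6 ≤ c.length := by
  by_contra hlt
  push_neg at hlt
  have h3 := hc.three_le_length
  have hev : Even c.length := (lw_walk_even c).2 rfl
  have h4 : c.length = 4 := by rcases hev with ⟨t, ht⟩; omega
  clear hlt h3 hev
  rw [SimpleGraph.Walk.isCycle_def] at hc
  obtain ⟨-, -, hnd⟩ := hc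
  cases c with
  | nil => simp at h4
  | cons h1 q1 =>
  cases q1 with
  | nil => simp at h4
  | cons h2 q2 =>
  cases q2 with
  | nil => simp at h4
  | cons h3 q3 =>
  cases q3 with
  | nil => simp at h4
  | cons h4' q4 =>
  cases q4 with
  | cons h5 q5 => simp [SimpleGraph.Walk.length_cons] at h4
  | nil =>
  rename_i a b d
  -- vertices v, a, b, d with adjacencies h1 : v~a, h2 : a~b, h3 : b~d, h4' : d~v
  simp only [SimpleGraph.Walk.support_cons, SimpleGraph.Walk.support_nil, List.tail_cons,
    List.nodup_cons, List.mem_cons, List.mem_singleton, List.not_mem_nil] at hnd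
  have had : a ≠ d := by tauto
  have hbv : b ≠ v := by tauto
  cases v with
  | inl P =>
    cases a with
    | inl _ => exact lw_not_adj_ll _ _ h1
    | inr L =>
    cases b with
    | inr _ => exact lw_not_adj_rr _ _ h2
    | inl P' =>
    cases d with
    | inl _ => exact lw_not_adj_ll _ _ h3
    | inr L' =>
    exact lw_no_four hm P P' L L' (fun h => hbv (by rw [h])) (fun h => had (by rw [h]))
      ((lw_adj_iff _ _).1 h1) ((lw_adj_iff _ _).1 h2.symm)
      ((lw_adj_iff _ _).1 h3) ((lw_adj_iff _ _).1 h4'.symm)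
  | inr L =>
    cases a with
    | inr _ => exact lw_not_adj_rr _ _ h1
    | inl P =>
    cases b with
    | inl _ => exact lw_not_adj_ll _ _ h2
    | inr L' =>
    cases d with
    | inr _ => exact lw_not_adj_rr _ _ h3
    | inl P' =>
    exact lw_no_four hm P P' L L' (fun h => had (by rw [h])) (fun h => hbv (by rw [h]))
      ((lw_adj_iff _ _).1 h1.symm) ((lw_adj_iff _ _).1 h4')
      ((lw_adj_iff _ _).1 h3.symm) ((lw_adj_iff _ _).1 h2)

lemma natcast_pow_char_pow (F : Type) [Field F] (p : ℕ) [Fact p.Prime] [CharP F p]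
    (n k : ℕ) : (n : F) ^ p ^ k = n := by
  induction k with
  | zero => simp
  | succ k ih =>
    rw [pow_succ, pow_mul, ih, ← frobenius_def]
    exact map_natCast (frobenius F p) n

end aux

/-- For odd prime `p`, the linearized Wenger graph `L_m(q)` has girth `6`. -/
theorem stmt13 (p e m : ℕ) [Fact p.Prime] (hp : Odd p) (he : 1 ≤ e) (hm : 1 ≤ m) :
    (∃ (v : (Fin (m + 1) → GaloisField p e) ⊕ (Fin (m + 1) → GaloisField p e))
        (c : (lwGraph p (GaloisField p e) m).Walk v v), c.IsCycle ∧ c.length = 6) ∧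
    (lwGraph p (GaloisField p e) m).girth = 6 := by
  set F := GaloisField p e with hF
  have hpp : p.Prime := Fact.out
  have hp0 : p ≠ 0 := hpp.ne_zero
  have h2 : (2 : F) ≠ 0 := by
    intro h
    have := (CharP.cast_eq_zero_iff F p 2).1 (by exact_mod_cast h)
    have hp2 : p = 2 := (Nat.prime_dvd_prime_iff_eq hpp Nat.prime_two).1 this
    rw [hp2] at hp
    exact (by decide : ¬ Odd 2) hp
  have hfrob2 : ∀ k : ℕ, (2 : F) ^ p ^ k = 2 := by
    intro k
    have := natcast_pow_char_pow F p 2 k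
    simpa using this
  have hneg1 : ∀ k : ℕ, (-1 : F) ^ p ^ k = -1 := fun k => (hp.pow).neg_one_pow
  set P1 : Fin (m+1) → F := fun i => if i = 0 then 0 else 0 with hP1
  set P2 : Fin (m+1) → F := fun _ => -1 with hP2
  set P3 : Fin (m+1) → F := fun i => if i = 0 then -2 else 0 with hP3
  set L1 : Fin (m+1) → F := fun i => if i = 0 then 1 else 0 with hL1
  set L2 : Fin (m+1) → F := fun i => if i = 0 then -1 else 2 with hL2
  set L3 : Fin (m+1) → F := fun _ => 0 with hL3
  have a1 : lwAdj p P1 L1 := by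
    intro k
    simp [hP1, hL1, Fin.succ_ne_zero, zero_pow (pow_ne_zero (k:ℕ) hp0)]
  have a2 : lwAdj p P2 L1 := by
    intro k
    simp [hP2, hL1, Fin.succ_ne_zero, hneg1]
  have a3 : lwAdj p P2 L2 := by
    intro k
    simp [hP2, hL2, Fin.succ_ne_zero, hneg1]
    try norm_num
    try ring
  have a4 : lwAdj p P3 L2 := by
    intro k
    have : (-2 : F) ^ p ^ (k:ℕ) = -2 := by
      have := mul_pow (-1 : F) 2 (p ^ (k:ℕ))
      rw [hneg1, hfrob2] at this
      rw [neg_one_mul] at this; exact this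
    simp [hP3, hL2, Fin.succ_ne_zero, this]
    try norm_num
    try ring
  have a5 : lwAdj p P3 L3 := by
    intro k
    simp [hP3, hL3, Fin.succ_ne_zero]
  have a6 : lwAdj p P1 L3 := by
    intro k
    simp [hP1, hL3, zero_pow (pow_ne_zero (k:ℕ) hp0)]
  -- distinctness
  have hP12 : P1 ≠ P2 := fun h => by
    have := congrFun h 0; simp [hP1, hP2] at this
  have hP13 : P1 ≠ P3 := fun h => by
    have := congrFun h 0; simp [hP1, hP3] at this
    exact h2 this
  have hP23 : P2 ≠ P3 := fun h => by
    have := congrFun h 0; simp [hP2, hP3] at this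
    exact one_ne_zero (α := F) (by linear_combination this)
  have hL12 : L1 ≠ L2 := fun h => by
    have := congrFun h 0; simp [hL1, hL2] at this
    exact h2 (by linear_combination this)
  have hL13 : L1 ≠ L3 := fun h => by
    have := congrFun h 0; simp [hL1, hL3] at this
  have hL23 : L2 ≠ L3 := fun h => by
    have := congrFun h 0; simp [hL2, hL3] at this
  set G := lwGraph p F m with hG
  have e1 : G.Adj (Sum.inl P1) (Sum.inr L1) := (lw_adj_iff _ _).2 a1
  have e2 : G.Adj (Sum.inr L1) (Sum.inl P2) := ((lw_adj_iff _ _).2 a2).symm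
  have e3 : G.Adj (Sum.inl P2) (Sum.inr L2) := (lw_adj_iff _ _).2 a3
  have e4 : G.Adj (Sum.inr L2) (Sum.inl P3) := ((lw_adj_iff _ _).2 a4).symm
  have e5 : G.Adj (Sum.inl P3) (Sum.inr L3) := (lw_adj_iff _ _).2 a5
  have e6 : G.Adj (Sum.inr L3) (Sum.inl P1) := ((lw_adj_iff _ _).2 a6).symm
  let c : G.Walk (Sum.inl P1) (Sum.inl P1) :=
    .cons e1 (.cons e2 (.cons e3 (.cons e4 (.cons e5 (.cons e6 .nil)))))
  have hlen : c.length = 6 := rfl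
  have hcyc : c.IsCycle := by
    rw [SimpleGraph.Walk.isCycle_def]
    refine ⟨?_, by simp [c], ?_⟩
    · rw [SimpleGraph.Walk.isTrail_def]
      simp [c, SimpleGraph.Walk.edges_cons, List.nodup_cons, Sym2.eq_iff,
        hP12, hP13, hP23, hL12, hL13, hL23, hP12.symm, hP13.symm, hP23.symm,
        hL12.symm, hL13.symm, hL23.symm]
    · simp [c, SimpleGraph.Walk.support_cons, List.nodup_cons,
        hP12, hP13, hP23, hL12, hL13, hL23, hP12.symm, hP13.symm, hP23.symm,
        hL12.symm, hL13.symm, hL23.symm]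
  refine ⟨⟨_, c, hcyc, hlen⟩, ?_⟩
  have hegirth : G.egirth = 6 := by
    apply le_antisymm
    · calc G.egirth ≤ (c.length : ℕ∞) := by
            rw [SimpleGraph.egirth]
            exact iInf_le_of_le _ (iInf_le_of_le c (iInf_le_of_le hcyc le_rfl))
        _ = 6 := by rw [hlen]; rfl
    · rw [SimpleGraph.le_egirth]
      intro a w hw
      have := lw_cycle_len_ge hm w hw
      exact_mod_cast this
  rw [SimpleGraph.girth, hegirth]
  rfl
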